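/- For every word w over the alphabet {1_1, ..., 1_k, 2}, the standard k-ribbon Fibonacci tableaux of shape w with entries 1, ..., n are in bijection with the maximal chains from the empty word ∅ to w in the poset S(k) (such chains necessarily have length n equal to the rank of w), where the tableau corresponding to a chain has j's placed in the k-ribbon created at the (n−j+1)-st step of the chain. -/

import Mathlib

namespace KRF

/-- A letter of the alphabet `{1_1, …, 1_k, 2}`:  `one j` stands for the letter `1_j`
(with `1 ≤ j ≤ k` for genuine letters), and `two` stands for the letter `2`. -/
inductive Letter (k : ℕ) : Type where
  | one : ℕ → Letter k
  | two : Letter k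
deriving DecidableEq

/-- A word over the alphabet `{1_1, …, 1_k, 2}`, listed from the leftmost letter to the
rightmost letter. -/
abbrev Word (k : ℕ) := List (Letter k)

/-- The contribution of a letter to the rank: each `1_j` counts `1` and each `2` counts `2`. -/
def Letter.rank {k : ℕ} : Letter k → ℕ
  | .one _ => 1
  | .two => 2

/-- The rank of a word: the sum of its letters. -/
def Word.rank {k : ℕ} (w : Word k) : ℕ := (w.map Letter.rank).sum

/-- The letter `1_j` is valid when `1 ≤ j ≤ k`. -/
def Letter.Valid (k : ℕ) : Letter k → Prop
  | .one j => 1 ≤ j ∧ j ≤ k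
  | .two => True

/-- A genuine word of the Fibonacci poset `Z(k)`: all of its letters are valid. -/
def Word.Valid (k : ℕ) (w : Word k) : Prop := ∀ l ∈ w, l.Valid k

/-- The cover relation of the Fibonacci poset `Z(k)`:  `z` is covered by `w` iff `z` is
obtained from `w` either by changing a `2` into some `1_j` when all letters to the left of
that `2` are `2`'s, or by deleting the leftmost letter of the form `1_j`. -/
def ZCovers (k : ℕ) (z w : Word k) : Prop :=
  (∃ (p s : Word k) (j : ℕ), (∀ l ∈ p, l = Letter.two) ∧ 1 ≤ j ∧ j ≤ k ∧
      w = p ++ Letter.two :: s ∧ z = p ++ Letter.one j :: s) ∨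
  (∃ (p s : Word k) (j : ℕ), (∀ l ∈ p, l = Letter.two) ∧ 1 ≤ j ∧ j ≤ k ∧
      w = p ++ Letter.one j :: s ∧ z = p ++ s)

/-- `c 0 ⋖ c 1 ⋖ ⋯ ⋖ c n` is a saturated chain in `Z(k)` starting at the empty word. -/
def IsZChain (k n : ℕ) (c : ℕ → Word k) : Prop :=
  c 0 = [] ∧ ∀ i, i < n → ZCovers k (c i) (c (i + 1))

end KRF
namespace KRF

/-- A column of a (tiled and filled) `k`-ribbon Fibonacci tableau.
`single h v` is a column of height 1 (shape letter `1_h`) tiled by one `k`-ribbon of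
height `h` filled with the value `v`.
`double ht hb vt vb` is a column of height 2 (shape letter `2`) tiled by a `k`-ribbon of
height `ht` filled with `vt` stacked on top of a `k`-ribbon of height `hb` (always
`hb = k + 1 - ht` for genuine tableaux) filled with `vb`. -/
inductive Col (k : ℕ) : Type where
  | single : ℕ → ℕ → Col k
  | double : ℕ → ℕ → ℕ → ℕ → Col k
deriving DecidableEq

/-- A (tiled, filled) `k`-ribbon Fibonacci tableau: its list of columns, from the leftmost
column to the rightmost one. -/
abbrev Tab (k : ℕ) := List (Col k)

/-- The shape letter of a column. -/
def Col.shape {k : ℕ} : Col k → Letter k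
  | .single h _ => Letter.one h
  | .double _ _ _ _ => Letter.two

/-- The `k`-ribbon Fibonacci shape (a word) underlying a tableau. -/
def Tab.shape {k : ℕ} (T : Tab k) : Word k := T.map Col.shape

/-- The value in the bottom `k`-ribbon of a column. -/
def Col.bottomVal {k : ℕ} : Col k → ℕ
  | .single _ v => v
  | .double _ _ _ vb => vb

/-- The heights occurring in a column are genuine ribbon heights: between `1` and `k`,
and in a column of height 2 the two heights sum to `k + 1`. -/
def Col.HeightsValid (k : ℕ) : Col k → Prop
  | .single h _ => 1 ≤ h ∧ h ≤ k
  | .double ht hb _ _ => 1 ≤ ht ∧ ht ≤ k ∧ hb = k + 1 - ht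

/-- The list of all entries of a tableau (one for each `k`-ribbon). -/
def Tab.entries {k : ℕ} (T : Tab k) : List ℕ :=
  (T.map fun c => match c with
    | Col.single _ v => [v]
    | Col.double _ _ vt vb => [vt, vb]).flatten

/-- The list of the bottom-ribbon values of the columns of a tableau. -/
def Tab.bottoms {k : ℕ} (T : Tab k) : List ℕ := T.map Col.bottomVal

/-- `T` is a standard `k`-ribbon Fibonacci tableau with entries `1, …, n`:
heights are valid, the entries are exactly `1, …, n`,  and the tableau can be built by
placing `n, n-1, …, 1` in order, each new `k`-ribbon being either appended (as a new
rightmost height-1 column) to the shape formed by the `k`-ribbons containing larger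
entries, or stacked on top of a single such `k`-ribbon.  Equivalently (and this is how we
formalize it): the bottom entries strictly decrease from left to right (in particular the
`k`-ribbon containing the leftmost square of the bottom row contains `n`), and in each
column of height 2 the top entry is smaller than the bottom entry. -/
def IsStandardTab (k n : ℕ) (T : Tab k) : Prop :=
  (∀ c ∈ T, Col.HeightsValid k c) ∧
  (Tab.entries T).Perm (List.range' 1 n) ∧
  List.Chain' (fun a b => b < a) (Tab.bottoms T) ∧
  (∀ c ∈ T, ∀ ht hb vt vb, c = Col.double ht hb vt vb → vt < vb)

/-- Updating a (partial) path tableau along one cover step `z ⋖ w` of `Z(k)`, placing the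
value `i` in the `k` new squares of `w` relative to `z`:  if `w` is obtained from `z` by
inserting a letter `1_j` after the prefix of `2`'s, a new height-1 column with a single
ribbon of height `j` filled with `i` is created there; if `w` is obtained from `z` by
changing the letter `1_h` just after the prefix of `2`'s into a `2`, the `k` new squares
of that column form a `k`-ribbon of height `k + 1 - h` filled with `i`, stacked on top of
the already present `k`-ribbon of height `h`. -/
def updateTab (k : ℕ) (i : ℕ) : Word k → Word k → Tab k → Tab k
  | Letter.two :: z', Letter.two :: w', c :: T => c :: updateTab k i z' w' T
  | Letter.one h :: _, Letter.two :: _, Col.single _ v :: T =>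
      Col.double (k + 1 - h) h i v :: T
  | z, Letter.one j :: w', T => if z = w' then Col.single j i :: T else T
  | _, _, T => T

/-- The `k`-ribbon Fibonacci path tableau determined by a saturated chain in `Z(k)`:
for each `i = 1, …, n` the value `i` is placed in the `k` new squares of `c i` relative
to `c (i-1)`. -/
def chainTab (k : ℕ) (c : ℕ → Word k) : ℕ → Tab k
  | 0 => []
  | m + 1 => updateTab k (m + 1) (c m) (c (m + 1)) (chainTab k c m)

/-- `T` is a `k`-ribbon Fibonacci path tableau with entries `1, …, n`: it is obtained
from some saturated chain `∅ = c 0 ⋖ c 1 ⋖ ⋯ ⋖ c n` in `Z(k)` by placing `i`'s in the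
`k` new squares created at the `i`-th step. -/
def IsPathTab (k n : ℕ) (T : Tab k) : Prop :=
  ∃ c : ℕ → Word k, IsZChain k n c ∧ T = chainTab k c n

end KRF
namespace KRF

/-- The cover relation of the poset `S(k)`: `z` is covered by `w` iff `w` is obtained from
`z` either by appending a letter `1_j` (at the right end), or by replacing one letter
`1_j` of `z` by a `2`. -/
def SCovers (k : ℕ) (z w : Word k) : Prop :=
  (∃ j : ℕ, 1 ≤ j ∧ j ≤ k ∧ w = z ++ [Letter.one j]) ∨
  (∃ (p s : Word k) (j : ℕ), 1 ≤ j ∧ j ≤ k ∧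
      z = p ++ Letter.one j :: s ∧ w = p ++ Letter.two :: s)

/-- Updating a (partial) standard tableau along one cover step `z ⋖ w` of `S(k)`, placing
the value `v` in the newly created `k`-ribbon: if `w = z ++ [1_j]`, a new rightmost
height-1 column with a single `k`-ribbon of height `j` filled with `v` is appended; if `w`
is obtained from `z` by replacing a letter `1_j` by a `2`, a `k`-ribbon of height
`k + 1 − j` filled with `v` is stacked on top of the single `k`-ribbon (of height `j`) of
that column. -/
def updateTabS (k : ℕ) (v : ℕ) : Word k → Word k → Tab k → Tab k
  | [], Letter.one j :: _, T => T ++ [Col.single j v]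
  | a :: z', b :: w', c :: T =>
      if a = b then c :: updateTabS k v z' w' T
      else
        match a, b, c with
        | Letter.one j, Letter.two, Col.single _ vb => Col.double (k + 1 - j) j v vb :: T
        | _, _, c => c :: T
  | _, _, T => T

/-- The standard `k`-ribbon Fibonacci tableau associated with a maximal chain
`∅ = c 0 ⋖ c 1 ⋖ ⋯ ⋖ c n` in `S(k)`: the value `j` is placed in the `k`-ribbon created at
the `(n − j + 1)`-st step of the chain. -/
def sChainTab (k n : ℕ) (c : ℕ → Word k) : ℕ → Tab k
  | 0 => []
  | m + 1 => updateTabS k (n - m) (c m) (c (m + 1)) (sChainTab k n c m)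

/-- `c` is a maximal (saturated) chain from the empty word to `w` in `S(k)`. -/
def IsSChainTo (k n : ℕ) (w : Word k) (c : Fin (n + 1) → Word k) : Prop :=
  c 0 = [] ∧ (∀ i : Fin n, SCovers k (c i.castSucc) (c i.succ)) ∧ c (Fin.last n) = w

/-- The standard tableau associated with a `Fin`-indexed maximal chain in `S(k)`. -/
def sChainTabFin (k n : ℕ) (c : Fin (n + 1) → Word k) : Tab k :=
  sChainTab k n (fun i => c ⟨min i n, Nat.lt_succ_of_le (Nat.min_le_right i n)⟩) n

open List
variable {k : ℕ}

lemma updateTabS_nil_one (v j : ℕ) (w' : Word k) (T : Tab k) :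
    updateTabS k v [] (Letter.one j :: w') T = T ++ [Col.single j v] := rfl

lemma updateTabS_cons (v : ℕ) (a b : Letter k) (z' w' : Word k) (c : Col k) (T : Tab k) :
    updateTabS k v (a :: z') (b :: w') (c :: T) =
      if a = b then c :: updateTabS k v z' w' T
      else match a, b, c with
        | Letter.one j, Letter.two, Col.single _ vb => Col.double (k + 1 - j) j v vb :: T
        | _, _, c => c :: T := rfl

/-! ### rank -/

lemma SCovers.rank_eq {z w : Word k} (h : SCovers k z w) :
    Word.rank w = Word.rank z + 1 := by
  rcases h with ⟨j, _, _, rfl⟩ | ⟨p, s, j, _, _, rfl, rfl⟩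
  · simp [Word.rank, Letter.rank]
  · simp [Word.rank, Letter.rank]; omega

/-! ### basic tableau lemmas -/

lemma shape_append (A B : Tab k) : Tab.shape (A ++ B) = Tab.shape A ++ Tab.shape B := by
  simp [Tab.shape]

lemma shape_cons (c : Col k) (T : Tab k) :
    Tab.shape (c :: T) = Col.shape c :: Tab.shape T := rfl

lemma entries_append (A B : Tab k) :
    Tab.entries (A ++ B) = Tab.entries A ++ Tab.entries B := by
  simp [Tab.entries]

lemma entries_single (h v : ℕ) (T : Tab k) :
    Tab.entries (Col.single h v :: T) = v :: Tab.entries T := by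
  simp [Tab.entries]

lemma entries_double (ht hb vt vb : ℕ) (T : Tab k) :
    Tab.entries (Col.double ht hb vt vb :: T) = vt :: vb :: Tab.entries T := by
  simp [Tab.entries]

lemma bottoms_append (A B : Tab k) :
    Tab.bottoms (A ++ B) = Tab.bottoms A ++ Tab.bottoms B := by
  simp [Tab.bottoms]

lemma bottomVal_mem_entries {c : Col k} {T : Tab k} (hc : c ∈ T) :
    Col.bottomVal c ∈ Tab.entries T := by
  induction T with
  | nil => simp at hc
  | cons d T ih =>
    rcases List.mem_cons.mp hc with rfl | hc
    · cases c <;> simp [Tab.entries, Col.bottomVal]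
    · cases d <;> simp [Tab.entries] at * <;> tauto

/-! ### truncation -/

def truncCol (t : ℕ) : Col k → Option (Col k)
  | .single h v => if t < v then some (.single h v) else none
  | .double ht hb vt vb =>
      if t < vt then some (.double ht hb vt vb)
      else if t < vb then some (.single hb vb) else none

def trunc (t : ℕ) (T : Tab k) : Tab k := T.filterMap (truncCol t)

lemma trunc_append (t : ℕ) (A B : Tab k) :
    trunc t (A ++ B) = trunc t A ++ trunc t B := by
  simp [trunc]

lemma trunc_cons (t : ℕ) (c : Col k) (T : Tab k) :
    trunc t (c :: T) = (truncCol t c).toList ++ trunc t T := by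
  simp [trunc, List.filterMap_cons]
  cases truncCol t c <;> simp

lemma trunc_all_gt {t : ℕ} {T : Tab k} (h : ∀ v ∈ Tab.entries T, t < v) :
    trunc t T = T := by
  induction T with
  | nil => rfl
  | cons c T ih =>
    cases c with
    | single hh v =>
      rw [entries_single] at h
      have hv : t < v := h v (by simp)
      rw [trunc_cons, ih fun v hv => h v (by simp [hv])]
      rw [show truncCol t (Col.single hh v) = some (Col.single hh v) from if_pos hv]
      rfl
    | double ht hb vt vb =>
      rw [entries_double] at h
      have hv : t < vt := h vt (by simp)
      rw [trunc_cons, ih fun v hv => h v (by simp [hv])]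
      rw [show truncCol t (Col.double ht hb vt vb) = some (Col.double ht hb vt vb) from if_pos hv]
      rfl

lemma trunc_all_le {t : ℕ} {T : Tab k}
    (hd : ∀ c ∈ T, ∀ ht hb vt vb, c = Col.double ht hb vt vb → vt < vb)
    (h : ∀ b ∈ Tab.bottoms T, b ≤ t) :
    trunc t T = [] := by
  induction T with
  | nil => rfl
  | cons c T ih =>
    have hrest : trunc t T = [] := by
      refine ih (fun c hc => hd c (by simp [hc])) (fun b hb => h b ?_)
      simp [Tab.bottoms] at hb ⊢; tauto
    cases c with
    | single hh v =>
      have hv : v ≤ t := h v (by simp [Tab.bottoms, Col.bottomVal])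
      rw [trunc_cons, hrest,
        show truncCol t (Col.single hh v) = none from if_neg (by omega)]
      rfl
    | double ht hb vt vb =>
      have h1 : vb ≤ t := h vb (by simp [Tab.bottoms, Col.bottomVal])
      have h2 : vt < vb := hd _ (by simp) ht hb vt vb rfl
      have : truncCol (k := k) t (Col.double ht hb vt vb) = none := by
        rw [truncCol, if_neg (by omega), if_neg (by omega)]
      rw [trunc_cons, hrest, this]
      rfl

lemma trunc_succ_of_not_mem {t : ℕ} {T : Tab k} (h : (t + 1) ∉ Tab.entries T) :
    trunc t T = trunc (t + 1) T := by
  induction T with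
  | nil => rfl
  | cons c T ih =>
    cases c with
    | single hh v =>
      rw [entries_single] at h
      simp only [List.mem_cons, not_or] at h
      rw [trunc_cons, trunc_cons, ih h.2]
      have : (t < v) = (t + 1 < v) := by
        have := h.1; simp only [eq_iff_iff]; omega
      simp [truncCol, this]
    | double ht hb vt vb =>
      rw [entries_double] at h
      simp only [List.mem_cons, not_or] at h
      rw [trunc_cons, trunc_cons, ih h.2.2]
      have e1 : (t < vt) = (t + 1 < vt) := by
        have := h.1; simp only [eq_iff_iff]; omega
      have e2 : (t < vb) = (t + 1 < vb) := by
        have := h.2.1; simp only [eq_iff_iff]; omega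
      simp [truncCol, e1, e2]
/-! ### structural behaviour of updateTabS -/

lemma updateTabS_append_lem (v j : ℕ) (T : Tab k) :
    updateTabS k v (Tab.shape T) (Tab.shape T ++ [Letter.one j]) T
      = T ++ [Col.single j v] := by
  induction T with
  | nil => rfl
  | cons c T ih =>
    rw [shape_cons, List.cons_append, updateTabS_cons, if_pos rfl, ih]
    rfl

lemma updateTabS_replace_lem (v j vb : ℕ) (Tp Ts : Tab k) (s s' : Word k) :
    updateTabS k v (Tab.shape Tp ++ Letter.one j :: s) (Tab.shape Tp ++ Letter.two :: s')
      (Tp ++ Col.single j vb :: Ts) =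
      Tp ++ Col.double (k + 1 - j) j v vb :: Ts := by
  induction Tp with
  | nil =>
    simp only [Tab.shape, List.map_nil, List.nil_append]
    rw [updateTabS_cons, if_neg (by simp)]
  | cons c T ih =>
    rw [shape_cons, List.cons_append, List.cons_append, List.cons_append,
      updateTabS_cons, if_pos rfl, ih]
    rfl

lemma single_of_shape {c : Col k} {j : ℕ} (h : Col.shape c = Letter.one j) :
    ∃ v, c = Col.single j v := by
  cases c with
  | single h' v => simp [Col.shape] at h; exact ⟨v, by rw [h]⟩
  | double => simp [Col.shape] at h

lemma shape_eq_append_cons {T : Tab k} {p s : Word k} {l : Letter k}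
    (h : Tab.shape T = p ++ l :: s) :
    ∃ Tp c Ts, T = Tp ++ c :: Ts ∧ Tab.shape Tp = p ∧ Col.shape c = l ∧ Tab.shape Ts = s := by
  rcases List.map_eq_append_iff.mp h with ⟨Tp, T2, rfl, hTp, hT2⟩
  rcases List.map_eq_cons_iff.mp hT2 with ⟨c, Ts, rfl, hc, hTs⟩
  exact ⟨Tp, c, Ts, rfl, hTp, hc, hTs⟩

lemma update_step_form (v : ℕ) {T : Tab k} {z w : Word k} (hz : Tab.shape T = z)
    (hcov : SCovers k z w) :
    (∃ j, 1 ≤ j ∧ j ≤ k ∧ w = z ++ [Letter.one j] ∧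
        updateTabS k v z w T = T ++ [Col.single j v]) ∨
    (∃ Tp Ts j vb, 1 ≤ j ∧ j ≤ k ∧ T = Tp ++ Col.single j vb :: Ts ∧
        z = Tab.shape Tp ++ Letter.one j :: Tab.shape Ts ∧
        w = Tab.shape Tp ++ Letter.two :: Tab.shape Ts ∧
        updateTabS k v z w T = Tp ++ Col.double (k + 1 - j) j v vb :: Ts) := by
  rcases hcov with ⟨j, h1, h2, rfl⟩ | ⟨p, s, j, h1, h2, hzp, hwp⟩
  · subst hz
    exact Or.inl ⟨j, h1, h2, rfl, updateTabS_append_lem v j T⟩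
  · subst hzp
    obtain ⟨Tp, c, Ts, rfl, rfl, hc, rfl⟩ := shape_eq_append_cons hz
    obtain ⟨vb, rfl⟩ := single_of_shape hc
    subst hwp
    exact Or.inr ⟨Tp, Ts, j, vb, h1, h2, rfl, rfl, rfl, updateTabS_replace_lem ..⟩

/-! ### trunc vs update -/

lemma trunc_update_le {v t : ℕ} (hvt : v ≤ t) {T : Tab k} {z w : Word k}
    (hz : Tab.shape T = z) (hcov : SCovers k z w) :
    trunc t (updateTabS k v z w T) = trunc t T := by
  rcases update_step_form v hz hcov with ⟨j, _, _, _, he⟩ | ⟨Tp, Ts, j, vb, _, _, rfl, _, _, he⟩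
  · rw [he, trunc_append]
    have : truncCol (k := k) t (Col.single j v) = none := if_neg (by omega)
    simp [trunc, this]
  · rw [he, trunc_append, trunc_append, trunc_cons, trunc_cons]
    have h1 : truncCol (k := k) t (Col.double (k + 1 - j) j v vb) =
        truncCol t (Col.single j vb) := by
      simp only [truncCol]
      rw [if_neg (by omega)]
    rw [h1]


lemma mem_entries_of_mem_bottoms {b : ℕ} {T : Tab k} (h : b ∈ Tab.bottoms T) :
    b ∈ Tab.entries T := by
  rcases List.mem_map.mp h with ⟨c, hc, rfl⟩
  exact bottomVal_mem_entries hc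

lemma sChainTab_succ (n : ℕ) (c : ℕ → Word k) (m : ℕ) :
    sChainTab k n c (m + 1) = updateTabS k (n - m) (c m) (c (m + 1)) (sChainTab k n c m) := rfl

lemma chain_main (n : ℕ) (c : ℕ → Word k) (h0 : c 0 = [])
    (hcov : ∀ i, i < n → SCovers k (c i) (c (i + 1))) :
    ∀ m, m ≤ n →
    Tab.shape (sChainTab k n c m) = c m ∧
    (∀ col ∈ sChainTab k n c m, Col.HeightsValid k col) ∧
    (Tab.entries (sChainTab k n c m)).Perm (List.range' (n - m + 1) m) ∧
    List.Chain' (fun a b => b < a) (Tab.bottoms (sChainTab k n c m)) ∧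
    (∀ col ∈ sChainTab k n c m, ∀ ht hb vt vb, col = Col.double ht hb vt vb → vt < vb) := by
  intro m
  induction m with
  | zero =>
    intro _
    refine ⟨h0 ▸ rfl, ?_, ?_, ?_, ?_⟩ <;>
      simp [sChainTab, Tab.entries, Tab.bottoms, List.Chain']
  | succ m ih =>
    intro hm1
    obtain ⟨hsh, hH, hperm, hch, hdb⟩ := ih (by omega)
    set T := sChainTab k n c m with hT
    have hent_gt : ∀ x ∈ Tab.entries T, n - m < x := by
      intro x hx
      have := List.mem_range'_1.mp (hperm.subset hx)
      omega
    have hcv := hcov m (by omega)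
    have hrange : List.range' (n - (m + 1) + 1) (m + 1) =
        (n - m) :: List.range' (n - m + 1) m := by
      have h1 : n - (m + 1) + 1 = n - m := by omega
      rw [h1, List.range'_succ]
    rcases update_step_form (n - m) hsh hcv with
      ⟨j, hj1, hj2, hw, he⟩ | ⟨Tp, Ts, j, vb, hj1, hj2, hTdec, hz, hw, he⟩
    · rw [sChainTab_succ, he]
      refine ⟨?_, ?_, ?_, ?_, ?_⟩
      · rw [shape_append, hsh, hw]; rfl
      · intro col hcol
        rcases List.mem_append.mp hcol with h | h
        · exact hH col h
        · simp at h
          subst h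
          exact ⟨hj1, hj2⟩
      · have he2 : Tab.entries (T ++ [Col.single j (n - m)]) =
            Tab.entries T ++ [n - m] := by
          rw [entries_append]; simp [Tab.entries]
        rw [he2, hrange]
        exact (List.perm_append_singleton _ _).trans (hperm.cons _)
      · have hb2 : Tab.bottoms (T ++ [Col.single j (n - m)]) =
            Tab.bottoms T ++ [n - m] := by
          rw [bottoms_append]; rfl
        rw [hb2, List.Chain', List.isChain_append]
        refine ⟨hch, List.isChain_singleton _, ?_⟩
        intro x hx y hy
        simp at hy
        subst hy
        have hxm : x ∈ Tab.bottoms T := List.mem_of_mem_getLast? hx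
        have := hent_gt x (mem_entries_of_mem_bottoms hxm)
        omega
      · intro col hcol ht hb vt vb hcd
        rcases List.mem_append.mp hcol with h | h
        · exact hdb col h ht hb vt vb hcd
        · simp at h; subst h; simp at hcd
    · rw [sChainTab_succ, he]
      have hvb : n - m < vb := by
        apply hent_gt
        rw [hTdec, entries_append, entries_single]
        simp
      refine ⟨?_, ?_, ?_, ?_, ?_⟩
      · rw [shape_append, shape_cons, hw]; rfl
      · intro col hcol
        rcases List.mem_append.mp hcol with h | h
        · exact hH col (by rw [hTdec]; exact List.mem_append_left _ h)
        · rcases List.mem_cons.mp h with rfl | h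
          · refine ⟨by omega, by omega, by omega⟩
          · exact hH col (by rw [hTdec]; exact List.mem_append_right _ (List.mem_cons_of_mem _ h))
      · have he2 : Tab.entries (Tp ++ Col.double (k + 1 - j) j (n - m) vb :: Ts) =
            Tab.entries Tp ++ (n - m) :: vb :: Tab.entries Ts := by
          rw [entries_append, entries_double]
        have he3 : Tab.entries T = Tab.entries Tp ++ vb :: Tab.entries Ts := by
          rw [hTdec, entries_append, entries_single]
        rw [he2, hrange]
        exact List.perm_middle.trans (by rw [← he3]; exact hperm.cons _)
      · have hb2 : Tab.bottoms (Tp ++ Col.double (k + 1 - j) j (n - m) vb :: Ts) =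
            Tab.bottoms T := by
          rw [hTdec, bottoms_append, bottoms_append]; rfl
        rw [hb2]; exact hch
      · intro col hcol ht hb vt vb' hcd
        rcases List.mem_append.mp hcol with h | h
        · exact hdb col (by rw [hTdec]; exact List.mem_append_left _ h) ht hb vt vb' hcd
        · rcases List.mem_cons.mp h with rfl | h
          · cases hcd
            omega
          · exact hdb col (by rw [hTdec]; exact List.mem_append_right _ (List.mem_cons_of_mem _ h)) ht hb vt vb' hcd



/-! ### surjectivity step -/

def colEntries : Col k → List ℕ
  | .single _ v => [v]
  | .double _ _ vt vb => [vt, vb]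

lemma entries_cons (c : Col k) (T : Tab k) :
    Tab.entries (c :: T) = colEntries c ++ Tab.entries T := by
  cases c <;> simp [Tab.entries, colEntries]

lemma entries_eq (T : Tab k) : Tab.entries T = (T.map colEntries).flatten := by
  induction T with
  | nil => rfl
  | cons c T ih => rw [entries_cons, List.map_cons, List.flatten_cons, ih]

lemma exists_split {v : ℕ} {T : Tab k} (h : v ∈ Tab.entries T) :
    ∃ P c S, T = P ++ c :: S ∧ v ∈ colEntries c := by
  rw [entries_eq] at h
  rcases List.mem_flatten.mp h with ⟨l, hl, hvl⟩
  rcases List.mem_map.mp hl with ⟨c, hcT, rfl⟩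
  rcases List.append_of_mem hcT with ⟨P, S, rfl⟩
  exact ⟨P, c, S, rfl, hvl⟩

lemma bottoms_split (P S : Tab k) (c : Col k) :
    Tab.bottoms (P ++ c :: S) = Tab.bottoms P ++ Col.bottomVal c :: Tab.bottoms S := by
  simp [Tab.bottoms]

lemma surj_step (t : ℕ) {T : Tab k}
    (hH : ∀ c ∈ T, Col.HeightsValid k c)
    (hnd : (Tab.entries T).Nodup)
    (hch : List.Chain' (fun a b => b < a) (Tab.bottoms T))
    (hdb : ∀ c ∈ T, ∀ ht hb vt vb, c = Col.double ht hb vt vb → vt < vb)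
    (hmem : t + 1 ∈ Tab.entries T) :
    SCovers k (Tab.shape (trunc (t + 1) T)) (Tab.shape (trunc t T)) ∧
    updateTabS k (t + 1) (Tab.shape (trunc (t + 1) T)) (Tab.shape (trunc t T))
      (trunc (t + 1) T) = trunc t T := by
  obtain ⟨P, c, S, rfl, hvc⟩ := exists_split hmem
  have hdecE : Tab.entries (P ++ c :: S) =
      Tab.entries P ++ (colEntries c ++ Tab.entries S) := by
    rw [entries_append, entries_cons]
  rw [hdecE] at hnd
  obtain ⟨ndP, nd2, disj⟩ := List.nodup_append.mp hnd
  have notP : t + 1 ∉ Tab.entries P := fun h =>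
    disj _ h _ (List.mem_append_left _ hvc) rfl
  obtain ⟨ndc, ndS, disj2⟩ := List.nodup_append.mp nd2
  have notS : t + 1 ∉ Tab.entries S := fun h => disj2 _ hvc _ h rfl
  have hpair := List.isChain_iff_pairwise.mp hch
  rw [bottoms_split] at hpair
  have hSlt : ∀ b ∈ Tab.bottoms S, b < Col.bottomVal c := by
    have := (List.pairwise_append.mp hpair).2.1
    exact fun b hb => (List.pairwise_cons.mp this).1 b hb
  have hdbS : ∀ c' ∈ S, ∀ ht hb vt vb, c' = Col.double ht hb vt vb → vt < vb :=
    fun c' h => hdb c' (List.mem_append_right _ (List.mem_cons_of_mem _ h))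
  have truncP : trunc t P = trunc (t + 1) P := trunc_succ_of_not_mem notP
  have hHc := hH c (List.mem_append_right _ (List.mem_cons_self))
  -- the common "append" case
  have append_case : ∀ h1 : ℕ, 1 ≤ h1 → h1 ≤ k →
      truncCol (k := k) t c = some (Col.single h1 (t + 1)) →
      truncCol (k := k) (t + 1) c = none →
      Col.bottomVal c = t + 1 →
      SCovers k (Tab.shape (trunc (t + 1) (P ++ c :: S))) (Tab.shape (trunc t (P ++ c :: S))) ∧
      updateTabS k (t + 1) (Tab.shape (trunc (t + 1) (P ++ c :: S)))
        (Tab.shape (trunc t (P ++ c :: S))) (trunc (t + 1) (P ++ c :: S))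
        = trunc t (P ++ c :: S) := by
    intro h1 hh1 hh2 tct tct1 hbv
    have hSle : ∀ b ∈ Tab.bottoms S, b ≤ t := by
      intro b hb; have := hSlt b hb; omega
    have truncS_t : trunc t S = [] := trunc_all_le hdbS hSle
    have truncS_t1 : trunc (t + 1) S = [] :=
      trunc_all_le hdbS (fun b hb => by have := hSle b hb; omega)
    have E1 : trunc (t + 1) (P ++ c :: S) = trunc t P := by
      rw [trunc_append, trunc_cons, tct1, truncS_t1, truncP]; simp
    have E2 : trunc t (P ++ c :: S) = trunc t P ++ [Col.single h1 (t + 1)] := by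
      rw [trunc_append, trunc_cons, tct, truncS_t]; rfl
    have Esh : Tab.shape (trunc t (P ++ c :: S)) =
        Tab.shape (trunc (t + 1) (P ++ c :: S)) ++ [Letter.one h1] := by
      rw [E1, E2, shape_append]; rfl
    constructor
    · exact Or.inl ⟨h1, hh1, hh2, Esh⟩
    · rw [Esh, E1, E2]
      exact updateTabS_append_lem (t + 1) h1 (trunc t P)
  cases c with
  | single h1 v0 =>
    have hv0 : v0 = t + 1 := by have := hvc; simp [colEntries] at this; omega
    subst hv0
    exact append_case h1 hHc.1 hHc.2 (if_pos (by omega)) (if_neg (by omega)) rfl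
  | double ht hb vt vb =>
    obtain ⟨hht1, hht2, hhb⟩ := hHc
    have hvtvb : vt < vb :=
      hdb _ (List.mem_append_right _ (List.mem_cons_self)) ht hb vt vb rfl
    have hhb1 : 1 ≤ hb := by omega
    have hhb2 : hb ≤ k := by omega
    rcases (by have := hvc; simp [colEntries] at this; omega : vt = t + 1 ∨ vb = t + 1) with hvt | hvb
    · -- top ribbon revealed: the "replace" case
      subst hvt
      have tct : truncCol (k := k) t (Col.double ht hb (t + 1) vb) =
          some (Col.double ht hb (t + 1) vb) := by
        simp only [truncCol]; rw [if_pos (by omega)]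
      have tct1 : truncCol (k := k) (t + 1) (Col.double ht hb (t + 1) vb) =
          some (Col.single hb vb) := by
        simp only [truncCol]; rw [if_neg (by omega), if_pos (by omega)]
      have truncS : trunc t S = trunc (t + 1) S := trunc_succ_of_not_mem notS
      have E1 : trunc (t + 1) (P ++ Col.double ht hb (t + 1) vb :: S) =
          trunc (t + 1) P ++ Col.single hb vb :: trunc (t + 1) S := by
        rw [trunc_append, trunc_cons, tct1]; rfl
      have E2 : trunc t (P ++ Col.double ht hb (t + 1) vb :: S) =
          trunc (t + 1) P ++ Col.double ht hb (t + 1) vb :: trunc (t + 1) S := by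
        rw [trunc_append, trunc_cons, tct, truncP, truncS]; rfl
      have Ez : Tab.shape (trunc (t + 1) (P ++ Col.double ht hb (t + 1) vb :: S)) =
          Tab.shape (trunc (t + 1) P) ++ Letter.one hb :: Tab.shape (trunc (t + 1) S) := by
        rw [E1, shape_append]; rfl
      have Ew : Tab.shape (trunc t (P ++ Col.double ht hb (t + 1) vb :: S)) =
          Tab.shape (trunc (t + 1) P) ++ Letter.two :: Tab.shape (trunc (t + 1) S) := by
        rw [E2, shape_append]; rfl
      constructor
      · exact Or.inr ⟨Tab.shape (trunc (t + 1) P), Tab.shape (trunc (t + 1) S), hb,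
          hhb1, hhb2, Ez, Ew⟩
      · rw [Ez, Ew, E1, E2]
        have := updateTabS_replace_lem (k := k) (t + 1) hb vb (trunc (t + 1) P)
          (trunc (t + 1) S) (Tab.shape (trunc (t + 1) S)) (Tab.shape (trunc (t + 1) S))
        rw [show k + 1 - hb = ht by omega] at this
        exact this
    · -- bottom ribbon revealed: append case with a single of height hb
      subst hvb
      have hvtle : vt ≤ t := by omega
      exact append_case hb hhb1 hhb2
        (by simp only [truncCol]; rw [if_neg (by omega), if_pos (by omega)])
        (by simp only [truncCol]; rw [if_neg (by omega), if_neg (by omega)])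
        rfl


/-! ### trunc of chain tableaux -/

lemma trunc_sChainTab_self (n : ℕ) (c : ℕ → Word k) (h0 : c 0 = [])
    (hcov : ∀ i, i < n → SCovers k (c i) (c (i + 1))) (m : ℕ) (hm : m ≤ n) :
    trunc (n - m) (sChainTab k n c m) = sChainTab k n c m := by
  apply trunc_all_gt
  intro x hx
  have := List.mem_range'_1.mp ((chain_main n c h0 hcov m hm).2.2.1.subset hx)
  omega

lemma trunc_chain (n : ℕ) (c : ℕ → Word k) (h0 : c 0 = [])
    (hcov : ∀ i, i < n → SCovers k (c i) (c (i + 1))) (m : ℕ) :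
    ∀ m', m ≤ m' → m' ≤ n →
      trunc (n - m) (sChainTab k n c m') = sChainTab k n c m := by
  intro m'
  induction m' with
  | zero =>
    intro h1 h2
    have : m = 0 := by omega
    subst this
    exact trunc_sChainTab_self n c h0 hcov 0 (by omega)
  | succ m' ih =>
    intro h1 h2
    rcases Nat.eq_or_lt_of_le h1 with heq | hlt
    · rw [heq]
      exact trunc_sChainTab_self n c h0 hcov (m' + 1) h2
    · rw [sChainTab_succ,
        trunc_update_le (show n - m' ≤ n - m by omega)
          (chain_main n c h0 hcov m' (by omega)).1 (hcov m' (by omega))]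
      exact ih (by omega) (by omega)

/-! ### Fin plumbing -/

def toNatChain {n : ℕ} (c : Fin (n + 1) → Word k) : ℕ → Word k :=
  fun i => c ⟨min i n, Nat.lt_succ_of_le (Nat.min_le_right i n)⟩

lemma sChainTabFin_eq (n : ℕ) (c : Fin (n + 1) → Word k) :
    sChainTabFin k n c = sChainTab k n (toNatChain c) n := rfl

lemma toNatChain_eq {n : ℕ} (c : Fin (n + 1) → Word k) {i : ℕ} (h : i ≤ n) :
    toNatChain c i = c ⟨i, by omega⟩ := by
  unfold toNatChain
  congr 1
  exact Fin.ext (by simp [Nat.min_eq_left h])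

lemma IsSChainTo.nat₀ {n : ℕ} {w : Word k} {c : Fin (n + 1) → Word k}
    (hc : IsSChainTo k n w c) : toNatChain c 0 = [] := by
  rw [toNatChain_eq c (Nat.zero_le n)]
  have h0 : (⟨0, by omega⟩ : Fin (n + 1)) = 0 := by exact Fin.ext (by simp)
  rw [h0]; exact hc.1

lemma IsSChainTo.natStep {n : ℕ} {w : Word k} {c : Fin (n + 1) → Word k}
    (hc : IsSChainTo k n w c) :
    ∀ i, i < n → SCovers k (toNatChain c i) (toNatChain c (i + 1)) := by
  intro i hi
  rw [toNatChain_eq c (by omega), toNatChain_eq c (by omega)]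
  have := hc.2.1 ⟨i, hi⟩
  have e1 : (Fin.castSucc ⟨i, hi⟩ : Fin (n + 1)) = ⟨i, by omega⟩ := Fin.ext rfl
  have e2 : (Fin.succ ⟨i, hi⟩ : Fin (n + 1)) = ⟨i + 1, by omega⟩ := Fin.ext rfl
  rwa [e1, e2] at this

lemma IsSChainTo.natLast {n : ℕ} {w : Word k} {c : Fin (n + 1) → Word k}
    (hc : IsSChainTo k n w c) : toNatChain c n = w := by
  rw [toNatChain_eq c le_rfl]
  have : (⟨n, by omega⟩ : Fin (n + 1)) = Fin.last n := Fin.ext rfl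
  rw [this]; exact hc.2.2

/-- For every word `w` over the alphabet `{1_1, …, 1_k, 2}`, the
standard `k`-ribbon Fibonacci tableaux of shape `w` with entries `1, …, n` are in
bijection with the maximal chains from the empty word `∅` to `w` in the poset `S(k)`
(such chains necessarily have length `n` equal to the rank of `w`), the tableau
corresponding to a chain having `j`'s placed in the `k`-ribbon created at the
`(n − j + 1)`-st step of the chain. -/
theorem standard_tableaux_biject_SChains (k : ℕ) (hk : 1 ≤ k) (w : Word k)
    (hw : Word.Valid k w) :
    (∀ (m : ℕ) (c : Fin (m + 1) → Word k), IsSChainTo k m w c → m = Word.rank w) ∧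
    Set.BijOn (sChainTabFin k (Word.rank w))
      {c : Fin (Word.rank w + 1) → Word k | IsSChainTo k (Word.rank w) w c}
      {T : Tab k | IsStandardTab k (Word.rank w) T ∧ Tab.shape T = w} := by
  constructor
  · intro m c hc
    have key : ∀ i, i ≤ m → Word.rank (toNatChain c i) = i := by
      intro i
      induction i with
      | zero => intro _; rw [hc.nat₀]; rfl
      | succ i ih =>
        intro h
        rw [(hc.natStep i (by omega)).rank_eq, ih (by omega)]
    have hkey := key m le_rfl
    rw [hc.natLast] at hkey
    omega
  · set n := Word.rank w with hn
    have recover : ∀ c : Fin (n + 1) → Word k, IsSChainTo k n w c →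
        ∀ m (hm : m ≤ n), c ⟨m, Nat.lt_succ_of_le hm⟩ =
          Tab.shape (trunc (n - m) (sChainTabFin k n c)) := by
      intro c hc m hm
      rw [sChainTabFin_eq, trunc_chain n (toNatChain c) hc.nat₀ hc.natStep m n hm le_rfl,
        (chain_main n (toNatChain c) hc.nat₀ hc.natStep m hm).1, toNatChain_eq c hm]
    refine ⟨?_, ?_, ?_⟩
    · -- MapsTo
      intro c hc
      simp only [Set.mem_setOf_eq] at hc ⊢
      obtain ⟨hsh, hH, hperm, hch, hdb⟩ :=
        chain_main n (toNatChain c) hc.nat₀ hc.natStep n le_rfl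
      rw [← sChainTabFin_eq n c] at hsh hH hperm hch hdb
      refine ⟨⟨hH, ?_, hch, hdb⟩, ?_⟩
      · rwa [show n - n + 1 = 1 by omega] at hperm
      · rw [hsh, hc.natLast]
    · -- InjOn
      intro c hc c' hc' heq
      simp only [Set.mem_setOf_eq] at hc hc'
      funext i
      rcases i with ⟨iv, hiv⟩
      have h1 := recover c hc iv (by omega)
      have h2 := recover c' hc' iv (by omega)
      rw [h1, h2, heq]
    · -- SurjOn
      intro T hT
      simp only [Set.mem_setOf_eq] at hT
      obtain ⟨⟨hH, hperm, hch, hdb⟩, hshape⟩ := hT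
      have hnd : (Tab.entries T).Nodup := hperm.nodup_iff.mpr (List.nodup_range' (s := 1) (n := n))
      have hmem : ∀ v, v ∈ Tab.entries T ↔ 1 ≤ v ∧ v < 1 + n := by
        intro v; rw [hperm.mem_iff, List.mem_range'_1]
      have E0 : trunc n T = [] := by
        apply trunc_all_le hdb
        intro b hb
        have := (hmem b).mp (mem_entries_of_mem_bottoms hb)
        omega
      have Efull : trunc 0 T = T := by
        apply trunc_all_gt
        intro v hv
        have := (hmem v).mp hv
        omega
      have step : ∀ t, t + 1 ≤ n →
          SCovers k (Tab.shape (trunc (t + 1) T)) (Tab.shape (trunc t T)) ∧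
          updateTabS k (t + 1) (Tab.shape (trunc (t + 1) T)) (Tab.shape (trunc t T))
            (trunc (t + 1) T) = trunc t T := by
        intro t ht
        exact surj_step t hH hnd hch hdb ((hmem (t + 1)).mpr (by omega))
      refine ⟨fun i => Tab.shape (trunc (n - i.1) T), ?_, ?_⟩
      · simp only [Set.mem_setOf_eq]
        refine ⟨?_, ?_, ?_⟩
        · show Tab.shape (trunc (n - (0 : Fin (n + 1)).1) T) = []
          rw [show n - ((0 : Fin (n + 1)).1) = n by simp, E0]
          rfl
        · intro i
          have hi : i.1 < n := i.isLt
          show SCovers k (Tab.shape (trunc (n - (i.castSucc).1) T))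
            (Tab.shape (trunc (n - (i.succ).1) T))
          have e1 : n - (i.castSucc).1 = (n - i.1 - 1) + 1 := by
            have : (i.castSucc).1 = i.1 := rfl
            omega
          have e2 : n - (i.succ).1 = n - i.1 - 1 := by
            have : (i.succ).1 = i.1 + 1 := rfl
            omega
          rw [e1, e2]
          exact (step (n - i.1 - 1) (by omega)).1
        · show Tab.shape (trunc (n - (Fin.last n).1) T) = w
          rw [show n - (Fin.last n).1 = 0 from by simp, Efull, hshape]
      · have main : ∀ m, m ≤ n →
            sChainTab k n (toNatChain (fun i : Fin (n + 1) => Tab.shape (trunc (n - i.1) T))) m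
              = trunc (n - m) T := by
          intro m
          induction m with
          | zero =>
            intro _
            rw [show n - 0 = n by omega, E0]
            rfl
          | succ m ih =>
            intro hm
            rw [sChainTab_succ, ih (by omega)]
            have ea : toNatChain (fun i : Fin (n + 1) => Tab.shape (trunc (n - i.1) T)) m
                = Tab.shape (trunc (n - m) T) := by
              rw [toNatChain_eq _ (by omega : m ≤ n)]
            have eb : toNatChain (fun i : Fin (n + 1) => Tab.shape (trunc (n - i.1) T)) (m + 1)
                = Tab.shape (trunc (n - (m + 1)) T) := by
              rw [toNatChain_eq _ (by omega : m + 1 ≤ n)]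
            rw [ea, eb]
            have e1 : n - m = (n - m - 1) + 1 := by omega
            have e2 : n - (m + 1) = n - m - 1 := by omega
            rw [e1, e2]
            exact (step (n - m - 1) (by omega)).2
        rw [sChainTabFin_eq, main n le_rfl, show n - n = 0 by omega, Efull]

end KRF
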